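/- Let X be a topological space such that for every countable set A ⊆ X there exists a continuous mapping φ : C_p*(A) → C_p(X) with φ(y)|_A = y for every y ∈ C_p*(A). Then every countable subset A of X which is discrete in its subspace topology is strongly functionally discrete in X. -/

import Mathlib

open Set Topology

/-- `C_p(X)`: the continuous real-valued functions on `X`, topologized by pointwise
convergence (i.e. as a subspace of `X → ℝ` with the product topology). -/
abbrev Cp (X : Type*) [TopologicalSpace X] : Type _ := {f : X → ℝ // Continuous f}

/-- `C_p*(X)`: the bounded continuous real-valued functions on `X`, topologized by
pointwise convergence. -/
abbrev CpStar (X : Type*) [TopologicalSpace X] : Type _ :=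
  {f : X → ℝ // Continuous f ∧ ∃ M : ℝ, ∀ x, |f x| ≤ M}

/-- A set is functionally open (a cozero set) if it is the cozero set of a
continuous real-valued function. -/
def FunctionallyOpen {X : Type*} [TopologicalSpace X] (U : Set X) : Prop :=
  ∃ f : X → ℝ, Continuous f ∧ U = f ⁻¹' ({0}ᶜ)

/-- A subset `A` is strongly functionally discrete in `X` if there is a family of
functionally open sets `G a ∋ a` (for `a ∈ A`) which is discrete in `X`: every point
of `X` has a neighborhood meeting `G a` for at most one `a ∈ A`. -/
def StronglyFunctionallyDiscrete {X : Type*} [TopologicalSpace X] (A : Set X) : Prop :=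
  ∃ G : A → Set X,
    (∀ a : A, (a : X) ∈ G a) ∧
    (∀ a : A, FunctionallyOpen (G a)) ∧
    (∀ x : X, ∃ V ∈ 𝓝 x, {a : A | (V ∩ G a).Nonempty}.Subsingleton)

lemma fo_univ {X : Type*} [TopologicalSpace X] : FunctionallyOpen (univ : Set X) :=
  ⟨fun _ => 1, continuous_const, by ext x; simp⟩

lemma fo_inter {X : Type*} [TopologicalSpace X] {U V : Set X}
    (hU : FunctionallyOpen U) (hV : FunctionallyOpen V) : FunctionallyOpen (U ∩ V) := by
  obtain ⟨f, hf, rfl⟩ := hU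
  obtain ⟨g, hg, rfl⟩ := hV
  exact ⟨fun x => f x * g x, hf.mul hg, by ext x; simp [mul_ne_zero_iff]⟩

lemma max_zero_ne_zero_iff {a : ℝ} : max (a) 0 ≠ 0 ↔ 0 < a := by
  constructor
  · intro h
    rcases le_or_gt a 0 with hle | hlt
    · exact absurd (max_eq_right hle) h
    · exact hlt
  · intro h
    rw [max_eq_left h.le]
    exact ne_of_gt h

lemma fo_gt {X : Type*} [TopologicalSpace X] {h : X → ℝ} (hh : Continuous h) (c : ℝ) :
    FunctionallyOpen {x | c < h x} := by
  refine ⟨fun x => max (h x - c) 0, (hh.sub continuous_const).max continuous_const, ?_⟩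
  ext x
  simp only [mem_setOf_eq, mem_preimage, mem_compl_iff, mem_singleton_iff]
  rw [← Ne, max_zero_ne_zero_iff, sub_pos]

lemma fo_lt {X : Type*} [TopologicalSpace X] {h : X → ℝ} (hh : Continuous h) (c : ℝ) :
    FunctionallyOpen {x | h x < c} := by
  refine ⟨fun x => max (c - h x) 0, (continuous_const.sub hh).max continuous_const, ?_⟩
  ext x
  simp only [mem_setOf_eq, mem_preimage, mem_compl_iff, mem_singleton_iff]
  rw [← Ne, max_zero_ne_zero_iff, sub_pos]

lemma fo_Ioo {X : Type*} [TopologicalSpace X] {u : X → ℝ} (hu : Continuous u) (a b : ℝ) :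
    FunctionallyOpen (u ⁻¹' Ioo a b) := by
  have : u ⁻¹' Ioo a b = {x | a < u x} ∩ {x | u x < b} := by
    ext x; simp [Ioo, and_comm]
  rw [this]
  exact fo_inter (fo_gt hu a) (fo_lt hu b)

lemma fo_biInter_range {X : Type*} [TopologicalSpace X] (n : ℕ) (U : ℕ → Set X)
    (h : ∀ k, FunctionallyOpen (U k)) :
    FunctionallyOpen (⋂ k ∈ Finset.range n, U k) := by
  induction n with
  | zero => simpa using fo_univ
  | succ m ih =>
    rw [Finset.range_add_one, Finset.set_biInter_insert]
    exact fo_inter (h m) ih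

lemma icc_pow_eq {m n : ℕ} {t : ℝ}
    (hm : t ∈ Icc ((3/4 : ℝ) * (1/2)^m) ((5/4) * (1/2)^m))
    (hn : t ∈ Icc ((3/4 : ℝ) * (1/2)^n) ((5/4) * (1/2)^n)) : m = n := by
  have key : ∀ p q : ℕ, p < q → ∀ s : ℝ,
      s ∈ Icc ((3/4 : ℝ) * (1/2)^p) ((5/4) * (1/2)^p) →
      s ∈ Icc ((3/4 : ℝ) * (1/2)^q) ((5/4) * (1/2)^q) → False := by
    intro p q hpq s hp hq
    have h1 : ((1:ℝ)/2)^q ≤ (1/2)^(p+1) := by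
      apply pow_le_pow_of_le_one (by norm_num) (by norm_num)
      omega
    have h2 : ((1:ℝ)/2)^(p+1) = (1/2)^p * (1/2) := pow_succ _ _
    have h3 : (0:ℝ) < (1/2)^p := by positivity
    have := hp.1
    have := hq.2
    nlinarith
  rcases lt_trichotomy m n with hlt | heq | hgt
  · exact absurd (key m n hlt t hm hn) not_false
  · exact heq
  · exact absurd (key n m hgt t hn hm) not_false

/-- If for every countable `A ⊆ X` there is a continuous extender
`C_p*(A) → C_p(X)`, then every countable discrete subspace of `X` is strongly
functionally discrete in `X`. -/
theorem stmt_6 {X : Type*} [TopologicalSpace X]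
    (h : ∀ A : Set X, A.Countable → ∃ φ : CpStar A → Cp X, Continuous φ ∧
      ∀ y : CpStar A, ∀ a : A, (φ y).1 a = y.1 a) :
    ∀ A : Set X, A.Countable → DiscreteTopology A →
      StronglyFunctionallyDiscrete A := by
  intro A hA hd
  classical
  haveI : Countable ↥A := hA.to_subtype
  haveI := hd
  obtain ⟨e, he⟩ := exists_injective_nat ↥A
  obtain ⟨σ, hσ⟩ := exists_surjective_nat (Finset ↥A)
  obtain ⟨φ, hφc, hφe⟩ := h A hA
  -- the zero function
  set z0 : CpStar ↥A := ⟨fun _ => 0, continuous_const, 0, by simp⟩ with hz0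
  -- function with pairwise distinct values 2^{-e a}
  set y0 : CpStar ↥A := ⟨fun a => (1/2 : ℝ)^(e a), continuous_of_discreteTopology, 1, by
    intro a
    rw [abs_of_pos (by positivity)]
    exact pow_le_one₀ (by norm_num) (by norm_num)⟩ with hy0
  -- indicator of the complement of the k-th finite set
  set χ : ℕ → CpStar ↥A := fun k =>
    ⟨fun b => if b ∈ σ k then 0 else 1, continuous_of_discreteTopology, 1, by
      intro b; dsimp only; split <;> simp⟩ with hχ
  set u : X → ℝ := fun x => (φ y0).1 x - (φ z0).1 x with hu
  set hfun : ℕ → X → ℝ := fun k x => (φ (χ k)).1 x - (φ z0).1 x with hhfun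
  have hucont : Continuous u := (φ y0).2.sub (φ z0).2
  have hhcont : ∀ k, Continuous (hfun k) := fun k => (φ (χ k)).2.sub (φ z0).2
  -- values on A
  have huval : ∀ a : ↥A, u ↑a = (1/2 : ℝ)^(e a) := by
    intro a
    simp only [hu, hφe y0 a, hφe z0 a]
    simp only [hy0, hz0]
    ring
  have hhval : ∀ k (a : ↥A), hfun k ↑a = if a ∈ σ k then 0 else 1 := by
    intro k a
    simp only [hhfun, hφe (χ k) a, hφe z0 a]
    simp only [hχ, hz0]
    ring_nf
  -- the family of functionally open sets
  set G : ↥A → Set X := fun a =>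
    (u ⁻¹' Ioo ((3/4 : ℝ) * (1/2)^(e a)) ((5/4) * (1/2)^(e a))) ∩
      ⋂ k ∈ Finset.range (e a + 1),
        (if a ∈ σ k then univ else {x | 1/2 < hfun k x}) with hG
  refine ⟨G, ?_, ?_, ?_⟩
  · -- a ∈ G a
    intro a
    constructor
    · rw [mem_preimage, huval a]
      have : (0:ℝ) < (1/2)^(e a) := by positivity
      constructor <;> [linarith; linarith]
    · rw [mem_iInter₂]
      intro k _
      split_ifs with hk
      · trivial
      · show (1:ℝ)/2 < hfun k ↑a
        rw [hhval k a, if_neg hk]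
        norm_num
  · -- functionally open
    intro a
    refine fo_inter (fo_Ioo hucont _ _) (fo_biInter_range _ _ ?_)
    intro k
    split_ifs with hk
    · exact fo_univ
    · exact fo_gt (hhcont k) _
  · -- discreteness
    intro x
    -- continuity of y ↦ φ(y)(x) at the zero function
    have hΨ : Continuous (fun y : CpStar ↥A => |(φ y).1 x - (φ z0).1 x|) := by
      have h1 : Continuous (fun y : CpStar ↥A => (φ y).1 x) :=
        (continuous_apply x).comp (continuous_subtype_val.comp hφc)
      exact (h1.sub continuous_const).abs
    have hmem : {y : CpStar ↥A | |(φ y).1 x - (φ z0).1 x| < 1/4} ∈ 𝓝 z0 := by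
      have h2 := (hΨ.continuousAt (x := z0)).preimage_mem_nhds
        (Iio_mem_nhds (by simp : |(φ z0).1 x - (φ z0).1 x| < 1/4))
      simpa [Set.preimage, Iio] using h2
    rw [nhds_induced, Filter.mem_comap] at hmem
    obtain ⟨s, hs, hsub⟩ := hmem
    rw [nhds_pi, Filter.mem_pi'] at hs
    obtain ⟨I, t, ht, htsub⟩ := hs
    -- key property: functions vanishing on I map close to φ(0) at x
    have P : ∀ y : CpStar ↥A, (∀ b ∈ I, y.1 b = 0) → |(φ y).1 x - (φ z0).1 x| < 1/4 := by
      intro y hy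
      apply hsub
      apply htsub
      intro b hb
      have := hy b hb
      rw [this]
      have h0 : (0:ℝ) ∈ t b := by
        have := ht b
        exact mem_of_mem_nhds (by simpa [hz0] using this)
      exact h0
    obtain ⟨k0, hk0⟩ := hσ I
    have hχk0 : |hfun k0 x| < 1/4 := by
      have := P (χ k0) (fun b hb => by
        show (if b ∈ σ k0 then (0:ℝ) else 1) = 0
        rw [if_pos (hk0 ▸ hb)])
      simpa [hhfun] using this
    -- the finite exceptional set
    set T : Set ↥A := {a | e a ≤ k0} ∪ {a | a ∈ I} with hT
    have hTfin : T.Finite := by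
      apply Set.Finite.union
      · have : {a : ↥A | e a ≤ k0} = e ⁻¹' (Iic k0) := rfl
        rw [this]
        exact Set.Finite.preimage (he.injOn) (finite_Iic k0)
      · exact I.finite_toSet
    set T' : Set ↥A := {a ∈ T | u x ∉ Icc ((3/4 : ℝ) * (1/2)^(e a)) ((5/4) * (1/2)^(e a))}
      with hT'
    have hT'fin : T'.Finite := hTfin.subset (sep_subset _ _)
    set V : Set X := {x' | hfun k0 x' < 1/2} ∩
      (⋃ a ∈ T', u ⁻¹' Icc ((3/4 : ℝ) * (1/2)^(e a)) ((5/4) * (1/2)^(e a)))ᶜ with hV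
    have hVopen : IsOpen V := by
      apply IsOpen.inter
      · exact isOpen_lt (hhcont k0) continuous_const
      · exact (hT'fin.isClosed_biUnion fun a _ => isClosed_Icc.preimage hucont).isOpen_compl
    have hxV : x ∈ V := by
      constructor
      · have := (abs_lt.mp hχk0).2
        show hfun k0 x < 1/2
        linarith
      · rw [mem_compl_iff, mem_iUnion₂]
        rintro ⟨a, ha, hmem⟩
        exact ha.2 hmem
    refine ⟨V, hVopen.mem_nhds hxV, ?_⟩
    have key : ∀ a : ↥A, (V ∩ G a).Nonempty →
        u x ∈ Icc ((3/4 : ℝ) * (1/2)^(e a)) ((5/4) * (1/2)^(e a)) := by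
      rintro a ⟨z, hzV, hzG⟩
      have haT : a ∈ T := by
        by_contra hn
        rw [hT, mem_union, not_or] at hn
        have hk0lt : k0 ∈ Finset.range (e a + 1) := by
          rw [Finset.mem_range]
          have : ¬ (e a ≤ k0) := hn.1
          omega
        have haI : a ∉ σ k0 := by rw [hk0]; exact hn.2
        have h3 := mem_iInter₂.mp hzG.2 k0 hk0lt
        rw [if_neg haI] at h3
        have h4 : hfun k0 z < 1/2 := hzV.1
        have h5 : (1:ℝ)/2 < hfun k0 z := h3
        linarith
      by_contra hux
      have haT' : a ∈ T' := ⟨haT, hux⟩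
      have hz1 : z ∈ u ⁻¹' Icc ((3/4 : ℝ) * (1/2)^(e a)) ((5/4) * (1/2)^(e a)) :=
        Ioo_subset_Icc_self hzG.1
      have hz2 := hzV.2
      rw [mem_compl_iff] at hz2
      exact hz2 (mem_iUnion₂.mpr ⟨a, haT', hz1⟩)
    intro a ha a' ha'
    have h1 := key a ha
    have h2 := key a' ha'
    exact he (icc_pow_eq h1 h2)
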